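/- In the Mallows model Pr(V|W) ∝ φ^{Kendall(V,W)} with 0 < φ < 1 and W a linear order ranking c first: for any alternative b ≠ c, Pr(c ≻ b) > 1/2. -/

import Mathlib

open Finset

/-- `a` is preferred to `b` in the linear order `V` (positions: 0 = top). -/
def prefers {m : ℕ} (V : Equiv.Perm (Fin m)) (a b : Fin m) : Prop :=
  V.symm a < V.symm b

instance {m : ℕ} (V : Equiv.Perm (Fin m)) (a b : Fin m) : Decidable (prefers V a b) :=
  inferInstanceAs (Decidable (_ < _))

/-- Kendall-tau distance between two linear orders. -/
def kendall {m : ℕ} (V W : Equiv.Perm (Fin m)) : ℕ :=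
  (Finset.univ.filter (fun p : Fin m × Fin m =>
    p.1 < p.2 ∧ ¬ (prefers V p.1 p.2 ↔ prefers W p.1 p.2))).card

namespace MallowsAux

variable {m : ℕ}

lemma symm_ne (V : Equiv.Perm (Fin m)) {x y : Fin m} (h : x ≠ y) : V.symm x ≠ V.symm y :=
  fun e => h (V.symm.injective e)

lemma not_prefers_iff (V : Equiv.Perm (Fin m)) {x y : Fin m} (h : x ≠ y) :
    ¬ prefers V x y ↔ prefers V y x :=
  ⟨fun hn => lt_of_le_of_ne (not_lt.mp hn) (symm_ne V h).symm, fun h' => not_lt.mpr h'.le⟩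

lemma prefers_swap_mul (c b : Fin m) (V : Equiv.Perm (Fin m)) (x y : Fin m) :
    prefers (Equiv.swap c b * V) x y ↔ prefers V (Equiv.swap c b x) (Equiv.swap c b y) := by
  simp [prefers, Equiv.Perm.mul_def, Equiv.symm_trans_apply, Equiv.symm_swap]

/-- disagreement pairs, ordered version -/
def E (V W : Equiv.Perm (Fin m)) : Finset (Fin m × Fin m) :=
  Finset.univ.filter (fun p => p.1 ≠ p.2 ∧ ¬ (prefers V p.1 p.2 ↔ prefers W p.1 p.2))

lemma mem_E {V W : Equiv.Perm (Fin m)} {p : Fin m × Fin m} :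
    p ∈ E V W ↔ p.1 ≠ p.2 ∧ ¬ (prefers V p.1 p.2 ↔ prefers W p.1 p.2) := by
  simp [E]

lemma disag_symm (V W : Equiv.Perm (Fin m)) {x y : Fin m} (h : x ≠ y) :
    ¬(prefers V x y ↔ prefers W x y) ↔ ¬(prefers V y x ↔ prefers W y x) := by
  rw [← not_prefers_iff V h, ← not_prefers_iff W h]
  tauto

lemma card_E (V W : Equiv.Perm (Fin m)) : (E V W).card = 2 * kendall V W := by
  classical
  have hsplit := Finset.card_filter_add_card_filter_not
    (s := E V W) (p := fun p : Fin m × Fin m => p.1 < p.2)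
  have h1 : (E V W).filter (fun p : Fin m × Fin m => p.1 < p.2)
      = Finset.univ.filter (fun p : Fin m × Fin m =>
        p.1 < p.2 ∧ ¬ (prefers V p.1 p.2 ↔ prefers W p.1 p.2)) := by
    ext p
    simp only [E, Finset.mem_filter, Finset.mem_univ, true_and]
    constructor
    · rintro ⟨⟨_, hd⟩, hlt⟩; exact ⟨hlt, hd⟩
    · rintro ⟨hlt, hd⟩; exact ⟨⟨ne_of_lt hlt, hd⟩, hlt⟩
  have h2 : ((E V W).filter (fun p : Fin m × Fin m => ¬ p.1 < p.2)).card
      = ((E V W).filter (fun p : Fin m × Fin m => p.1 < p.2)).card := by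
    apply Finset.card_bij' (fun p _ => Prod.swap p) (fun p _ => Prod.swap p)
    · intro p hp
      simp only [Finset.mem_filter, mem_E] at hp ⊢
      obtain ⟨⟨hne, hd⟩, hnlt⟩ := hp
      have hlt : p.2 < p.1 := lt_of_le_of_ne (not_lt.mp hnlt) (Ne.symm hne)
      exact ⟨⟨Ne.symm hne, (disag_symm V W hne).mp hd⟩, hlt⟩
    · intro p hp
      simp only [Finset.mem_filter, mem_E] at hp ⊢
      obtain ⟨⟨hne, hd⟩, hlt⟩ := hp
      exact ⟨⟨Ne.symm hne, (disag_symm V W hne).mp hd⟩, not_lt.mpr hlt.le⟩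
    · intro p _; rfl
    · intro p _; rfl
  rw [h2, h1] at hsplit
  unfold kendall
  omega

def otherEl (b c : Fin m) (p : Fin m × Fin m) : Fin m :=
  if p.1 = b ∨ p.1 = c then p.2 else p.1

def hmap (W : Equiv.Perm (Fin m)) (b c : Fin m) (p : Fin m × Fin m) : Fin m × Fin m :=
  if prefers W b (otherEl b c p) then (Equiv.swap c b p.1, Equiv.swap c b p.2) else p

lemma key (W : Equiv.Perm (Fin m)) (c b : Fin m)
    (htop : (W.symm c : ℕ) = 0) (hb : b ≠ c) (V : Equiv.Perm (Fin m))
    (hV : prefers V b c) :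
    kendall (Equiv.swap c b * V) W < kendall V W := by
  classical
  set V' := Equiv.swap c b * V with hV'
  have hcb : c ≠ b := Ne.symm hb
  have hWc : ∀ x : Fin m, x ≠ c → prefers W c x := by
    intro x hx
    have hne : W.symm x ≠ W.symm c := symm_ne W hx
    have hne0 : (W.symm x : ℕ) ≠ 0 := fun h0 => hne (Fin.ext (by rw [h0, htop]))
    show W.symm c < W.symm x
    rw [Fin.lt_def, htop]
    omega
  have hWcb : prefers W c b := hWc b hb
  have hnWbc : ¬ prefers W b c := (not_prefers_iff W hb).mpr hWcb
  have hnVcb : ¬ prefers V c b := (not_prefers_iff V hcb).mpr hV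
  have main : ∀ p ∈ E V' W, hmap W b c p ∈ E V W ∧ hmap W b c p ≠ (b, c) ∧
      hmap W b c p ≠ (c, b) ∧ hmap W b c (hmap W b c p) = p := by
    rintro ⟨x, y⟩ hp
    rw [mem_E] at hp
    obtain ⟨hxy, hd⟩ := hp
    simp only at hxy hd
    rw [hV', prefers_swap_mul] at hd
    by_cases hxb : x = b
    · have hxb' : b = x := hxb.symm
      subst hxb'
      by_cases hyc : y = c
      · have hyc' : c = y := hyc.symm
        subst hyc'
        rw [Equiv.swap_apply_right, Equiv.swap_apply_left] at hd
        exact absurd (iff_of_false hnVcb hnWbc) hd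
      · have hyb : y ≠ b := fun e => hxy e.symm
        rw [Equiv.swap_apply_right, Equiv.swap_apply_of_ne_of_ne hyc hyb] at hd
        have hoth : otherEl b c (b, y) = y := by simp [otherEl]
        by_cases w : prefers W b y
        · have hu : ¬ prefers V c y := fun hu => hd (iff_of_true hu w)
          have himg : hmap W b c (b, y) = (c, y) := by
            simp [hmap, hoth, w, Equiv.swap_apply_right,
              Equiv.swap_apply_of_ne_of_ne hyc hyb]
          refine ⟨?_, ?_, ?_, ?_⟩
          · rw [himg, mem_E]
            exact ⟨Ne.symm hyc, fun hiff => hu (hiff.mpr (hWc y hyc))⟩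
          · rw [himg]; exact fun e => hcb (congrArg Prod.fst e)
          · rw [himg]; exact fun e => hyb (congrArg Prod.snd e)
          · rw [himg]
            have hoth2 : otherEl b c (c, y) = y := by simp [otherEl]
            simp [hmap, hoth2, w, Equiv.swap_apply_left,
              Equiv.swap_apply_of_ne_of_ne hyc hyb]
        · have hv : prefers V c y := by
            by_contra hnv; exact hd (iff_of_false hnv w)
          have himg : hmap W b c (b, y) = (b, y) := by simp [hmap, hoth, w]
          have hVby : prefers V b y := lt_trans hV hv
          refine ⟨?_, ?_, ?_, ?_⟩
          · rw [himg, mem_E]; exact ⟨hxy, fun hiff => w (hiff.mp hVby)⟩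
          · rw [himg]; exact fun e => hyc (congrArg Prod.snd e)
          · rw [himg]; exact fun e => hb (congrArg Prod.fst e)
          · rw [himg, himg]
    · by_cases hxc : x = c
      · have hxc' : c = x := hxc.symm
        subst hxc'
        by_cases hyb : y = b
        · have hyb' : b = y := hyb.symm
          subst hyb'
          rw [Equiv.swap_apply_left, Equiv.swap_apply_right] at hd
          exact absurd (iff_of_true hV hWcb) hd
        · have hyc : y ≠ c := fun e => hxy e.symm
          rw [Equiv.swap_apply_left, Equiv.swap_apply_of_ne_of_ne hyc hyb] at hd
          have hnu : ¬ prefers V b y := fun hu => hd (iff_of_true hu (hWc y hyc))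
          have hoth : otherEl b c (c, y) = y := by simp [otherEl]
          by_cases w : prefers W b y
          · have himg : hmap W b c (c, y) = (b, y) := by
              simp [hmap, hoth, w, Equiv.swap_apply_left,
                Equiv.swap_apply_of_ne_of_ne hyc hyb]
            refine ⟨?_, ?_, ?_, ?_⟩
            · rw [himg, mem_E]; exact ⟨Ne.symm hyb, fun hiff => hnu (hiff.mpr w)⟩
            · rw [himg]; exact fun e => hyc (congrArg Prod.snd e)
            · rw [himg]; exact fun e => hb (congrArg Prod.fst e)
            · rw [himg]
              have hoth2 : otherEl b c (b, y) = y := by simp [otherEl]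
              simp [hmap, hoth2, w, Equiv.swap_apply_right,
                Equiv.swap_apply_of_ne_of_ne hyc hyb]
          · have hty : prefers V y b := (not_prefers_iff V (Ne.symm hyb)).mp hnu
            have htc : prefers V y c := lt_trans hty hV
            have hnvc : ¬ prefers V c y := (not_prefers_iff V (Ne.symm hyc)).mpr htc
            have himg : hmap W b c (c, y) = (c, y) := by simp [hmap, hoth, w]
            refine ⟨?_, ?_, ?_, ?_⟩
            · rw [himg, mem_E]; exact ⟨hxy, fun hiff => hnvc (hiff.mpr (hWc y hyc))⟩
            · rw [himg]; exact fun e => hcb (congrArg Prod.fst e)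
            · rw [himg]; exact fun e => hyb (congrArg Prod.snd e)
            · rw [himg, himg]
      · rw [Equiv.swap_apply_of_ne_of_ne hxc hxb] at hd
        by_cases hyb : y = b
        · have hyb' : b = y := hyb.symm
          subst hyb'
          rw [Equiv.swap_apply_right] at hd
          have hoth : otherEl b c (x, b) = x := by simp [otherEl, hxb, hxc]
          by_cases w : prefers W b x
          · have hnwxb : ¬ prefers W x b := (not_prefers_iff W hxb).mpr w
            have hvxc : prefers V x c := by
              by_contra hn; exact hd (iff_of_false hn hnwxb)
            have himg : hmap W b c (x, b) = (x, c) := by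
              simp [hmap, hoth, w, Equiv.swap_apply_right,
                Equiv.swap_apply_of_ne_of_ne hxc hxb]
            have hnwxc : ¬ prefers W x c := (not_prefers_iff W hxc).mpr (hWc x hxc)
            refine ⟨?_, ?_, ?_, ?_⟩
            · rw [himg, mem_E]; exact ⟨hxc, fun hiff => hnwxc (hiff.mp hvxc)⟩
            · rw [himg]; exact fun e => hxb (congrArg Prod.fst e)
            · rw [himg]; exact fun e => hxc (congrArg Prod.fst e)
            · rw [himg]
              have hoth2 : otherEl b c (x, c) = x := by simp [otherEl, hxb, hxc]
              simp [hmap, hoth2, w, Equiv.swap_apply_left,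
                Equiv.swap_apply_of_ne_of_ne hxc hxb]
          · have hwxb : prefers W x b := (not_prefers_iff W (Ne.symm hxb)).mp w
            have hnvxc : ¬ prefers V x c := fun hu => hd (iff_of_true hu hwxb)
            have hvcx : prefers V c x := (not_prefers_iff V hxc).mp hnvxc
            have hvbx : prefers V b x := lt_trans hV hvcx
            have hnvxb : ¬ prefers V x b := (not_prefers_iff V hxb).mpr hvbx
            have himg : hmap W b c (x, b) = (x, b) := by simp [hmap, hoth, w]
            refine ⟨?_, ?_, ?_, ?_⟩
            · rw [himg, mem_E]; exact ⟨hxb, fun hiff => hnvxb (hiff.mpr hwxb)⟩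
            · rw [himg]; exact fun e => hxb (congrArg Prod.fst e)
            · rw [himg]; exact fun e => hxc (congrArg Prod.fst e)
            · rw [himg, himg]
        · by_cases hyc : y = c
          · have hyc' : c = y := hyc.symm
            subst hyc'
            rw [Equiv.swap_apply_left] at hd
            have hnwxc : ¬ prefers W x c := (not_prefers_iff W hxc).mpr (hWc x hxc)
            have hvxb : prefers V x b := by
              by_contra hn; exact hd (iff_of_false hn hnwxc)
            have hvxc : prefers V x c := lt_trans hvxb hV
            have hoth : otherEl b c (x, c) = x := by simp [otherEl, hxb, hxc]
            by_cases w : prefers W b x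
            · have hnwxb : ¬ prefers W x b := (not_prefers_iff W hxb).mpr w
              have himg : hmap W b c (x, c) = (x, b) := by
                simp [hmap, hoth, w, Equiv.swap_apply_left,
                  Equiv.swap_apply_of_ne_of_ne hxc hxb]
              refine ⟨?_, ?_, ?_, ?_⟩
              · rw [himg, mem_E]; exact ⟨hxb, fun hiff => hnwxb (hiff.mp hvxb)⟩
              · rw [himg]; exact fun e => hxb (congrArg Prod.fst e)
              · rw [himg]; exact fun e => hxc (congrArg Prod.fst e)
              · rw [himg]
                have hoth2 : otherEl b c (x, b) = x := by simp [otherEl, hxb, hxc]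
                simp [hmap, hoth2, w, Equiv.swap_apply_right,
                  Equiv.swap_apply_of_ne_of_ne hxc hxb]
            · have himg : hmap W b c (x, c) = (x, c) := by simp [hmap, hoth, w]
              refine ⟨?_, ?_, ?_, ?_⟩
              · rw [himg, mem_E]; exact ⟨hxc, fun hiff => hnwxc (hiff.mp hvxc)⟩
              · rw [himg]; exact fun e => hxb (congrArg Prod.fst e)
              · rw [himg]; exact fun e => hxc (congrArg Prod.fst e)
              · rw [himg, himg]
          · rw [Equiv.swap_apply_of_ne_of_ne hyc hyb] at hd
            have himg : hmap W b c (x, y) = (x, y) := by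
              by_cases w : prefers W b x <;>
                simp [hmap, otherEl, hxb, hxc, w,
                  Equiv.swap_apply_of_ne_of_ne hxc hxb,
                  Equiv.swap_apply_of_ne_of_ne hyc hyb]
            refine ⟨?_, ?_, ?_, ?_⟩
            · rw [himg, mem_E]; exact ⟨hxy, hd⟩
            · rw [himg]; exact fun e => hxb (congrArg Prod.fst e)
            · rw [himg]; exact fun e => hxc (congrArg Prod.fst e)
            · rw [himg, himg]
  have hbc_mem : (b, c) ∈ E V W := mem_E.mpr ⟨hb, fun hiff => hnWbc (hiff.mp hV)⟩
  have hcb_mem : (c, b) ∈ E V W := mem_E.mpr ⟨hcb, fun hiff => hnVcb (hiff.mpr hWcb)⟩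
  have hcbe : (c, b) ∈ (E V W).erase (b, c) :=
    Finset.mem_erase.mpr ⟨fun e => hcb (congrArg Prod.fst e), hcb_mem⟩
  have hsub : (E V' W).card ≤ (((E V W).erase (b, c)).erase (c, b)).card := by
    apply Finset.card_le_card_of_injOn (hmap W b c)
    · intro p hp
      obtain ⟨h1, h2, h3, _⟩ := main p hp
      exact Finset.mem_erase.mpr ⟨h3, Finset.mem_erase.mpr ⟨h2, h1⟩⟩
    · intro p hp q hq e
      rw [← (main p hp).2.2.2, ← (main q hq).2.2.2, e]
  have hc1 := Finset.card_erase_of_mem hcbe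
  have hc2 := Finset.card_erase_of_mem hbc_mem
  have hpos : 0 < ((E V W).erase (b, c)).card := Finset.card_pos.mpr ⟨_, hcbe⟩
  have e1 := card_E V' W
  have e2 := card_E V W
  omega

end MallowsAux

open MallowsAux in
/-- in the Mallows model with ground truth `W` ranking `c` first,
for any `b ≠ c`, `Pr(c ≻ b) > 1/2`. -/
theorem mallows_top_majority {m : ℕ} (φ : ℝ) (hφ0 : 0 < φ) (hφ1 : φ < 1)
    (W : Equiv.Perm (Fin m)) (c b : Fin m)
    (htop : (W.symm c : ℕ) = 0) (hb : b ≠ c) :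
    (∑ V ∈ Finset.univ.filter (fun V : Equiv.Perm (Fin m) => prefers V c b),
        φ ^ kendall V W) / (∑ V : Equiv.Perm (Fin m), φ ^ kendall V W)
      > 1 / 2 := by
  classical
  have hcb : c ≠ b := Ne.symm hb
  have hbm : (W.symm b : ℕ) ≠ 0 := by
    intro h0
    exact hb (W.symm.injective (Fin.ext (by rw [h0, htop])))
  have hWcb : prefers W c b := by
    show W.symm c < W.symm b
    rw [Fin.lt_def, htop]
    omega
  set S := Finset.univ.filter (fun V : Equiv.Perm (Fin m) => prefers V c b) with hS
  set T := Finset.univ.filter (fun V : Equiv.Perm (Fin m) => prefers V b c) with hT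
  have hsum_split : ∑ V : Equiv.Perm (Fin m), φ ^ kendall V W
      = (∑ V ∈ S, φ ^ kendall V W) + ∑ V ∈ T, φ ^ kendall V W := by
    rw [← Finset.sum_filter_add_sum_filter_not Finset.univ
      (fun V : Equiv.Perm (Fin m) => prefers V c b)]
    congr 1
    apply Finset.sum_congr _ (fun _ _ => rfl)
    ext V
    simp only [hT, Finset.mem_filter, Finset.mem_univ, true_and]
    exact not_prefers_iff V hcb
  have hTS : ∑ V ∈ T, φ ^ kendall (Equiv.swap c b * V) W = ∑ V ∈ S, φ ^ kendall V W := by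
    apply Finset.sum_nbij' (i := fun V => Equiv.swap c b * V) (j := fun V => Equiv.swap c b * V)
    · intro V hV
      simp only [hT, Finset.mem_filter, Finset.mem_univ, true_and] at hV
      simp only [hS, Finset.mem_filter, Finset.mem_univ, true_and]
      rw [prefers_swap_mul, Equiv.swap_apply_left, Equiv.swap_apply_right]
      exact hV
    · intro V hV
      simp only [hS, Finset.mem_filter, Finset.mem_univ, true_and] at hV
      simp only [hT, Finset.mem_filter, Finset.mem_univ, true_and]
      rw [prefers_swap_mul, Equiv.swap_apply_left, Equiv.swap_apply_right]
      exact hV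
    · intro V _
      rw [← mul_assoc, Equiv.swap_mul_self, one_mul]
    · intro V _
      rw [← mul_assoc, Equiv.swap_mul_self, one_mul]
    · intro V _
      rfl
  have hTne : T.Nonempty := by
    refine ⟨Equiv.swap c b * W, ?_⟩
    simp only [hT, Finset.mem_filter, Finset.mem_univ, true_and]
    rw [prefers_swap_mul, Equiv.swap_apply_left, Equiv.swap_apply_right]
    exact hWcb
  have hlt : ∑ V ∈ T, φ ^ kendall V W < ∑ V ∈ T, φ ^ kendall (Equiv.swap c b * V) W := by
    apply Finset.sum_lt_sum_of_nonempty hTne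
    intro V hV
    simp only [hT, Finset.mem_filter, Finset.mem_univ, true_and] at hV
    exact pow_lt_pow_right_of_lt_one₀ hφ0 hφ1 (key W c b htop hb V hV)
  have hST : ∑ V ∈ T, φ ^ kendall V W < ∑ V ∈ S, φ ^ kendall V W := hTS ▸ hlt
  have hSpos : 0 < ∑ V ∈ S, φ ^ kendall V W := by
    apply Finset.sum_pos (fun V _ => pow_pos hφ0 _)
    refine ⟨W, ?_⟩
    simp only [hS, Finset.mem_filter, Finset.mem_univ, true_and]
    exact hWcb
  have hTpos : 0 < ∑ V ∈ T, φ ^ kendall V W :=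
    Finset.sum_pos (fun V _ => pow_pos hφ0 _) hTne
  rw [hsum_split, gt_iff_lt, div_lt_div_iff₀ (by norm_num) (by linarith)]
  linarith
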